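/- For all positive integers s ≥ 2 with s ≠ 3, and all positive integers h with l(h) ≥ 2, the strict inequality s·l(h) − l(s·h) > ⌊(s+1)/2⌋ holds. -/

import Mathlib

noncomputable def ell (g : ℕ) : ℕ :=
  sInf {k | ∃ a n : Fin k → ℕ, (∀ i, a i = 1 ∨ a i = 3) ∧ g = ∑ i, a i * 2 ^ n i}

noncomputable def obj (g : ℕ) : ℕ := g - ell g

/-- number of ones in binary -/
def pc : ℕ → ℕ
  | 0 => 0
  | (n+1) => pc ((n+1)/2) + (n+1) % 2
decreasing_by exact Nat.div_lt_self (Nat.succ_pos n) one_lt_two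

lemma pc_zero : pc 0 = 0 := by rw [pc]

lemma pc_pos_eq (s : ℕ) (hs : 0 < s) : pc s = pc (s / 2) + s % 2 := by
  cases s with
  | zero => omega
  | succ n => rw [pc]

lemma ellSet_nonempty (g : ℕ) :
    {k | ∃ a n : Fin k → ℕ, (∀ i, a i = 1 ∨ a i = 3) ∧ g = ∑ i, a i * 2 ^ n i}.Nonempty := by
  refine ⟨g, fun _ => 1, fun _ => 0, fun i => Or.inl rfl, ?_⟩
  simp

lemma ell_spec (g : ℕ) :
    ∃ a n : Fin (ell g) → ℕ, (∀ i, a i = 1 ∨ a i = 3) ∧ g = ∑ i, a i * 2 ^ n i :=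
  Nat.sInf_mem (ellSet_nonempty g)

lemma ell_le {g k : ℕ} (a n : Fin k → ℕ) (ha : ∀ i, a i = 1 ∨ a i = 3)
    (hg : g = ∑ i, a i * 2 ^ n i) : ell g ≤ k :=
  Nat.sInf_le ⟨a, n, ha, hg⟩

lemma ell_zero : ell 0 = 0 :=
  Nat.le_zero.mp (ell_le (k := 0) Fin.elim0 Fin.elim0 (fun i => i.elim0) (by simp))

lemma rep_double {g k : ℕ} (a n : Fin k → ℕ) (hg : g = ∑ i, a i * 2 ^ n i) :
    2 * g = ∑ i, a i * 2 ^ (n i + 1) := by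
  subst hg
  rw [Finset.mul_sum]
  exact Finset.sum_congr rfl fun i _ => by ring

lemma ell_two_mul (g : ℕ) : ell (2 * g) ≤ ell g := by
  obtain ⟨a, n, ha, hg⟩ := ell_spec g
  exact ell_le a (fun i => n i + 1) ha (rep_double a n hg)

lemma rep_add {x y kx ky : ℕ} (a1 n1 : Fin kx → ℕ) (a2 n2 : Fin ky → ℕ)
    (hx : x = ∑ i, a1 i * 2 ^ n1 i) (hy : y = ∑ i, a2 i * 2 ^ n2 i) :
    x + y = ∑ i : Fin (kx + ky), Fin.append a1 a2 i * 2 ^ Fin.append n1 n2 i := by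
  subst hx hy
  rw [Fin.sum_univ_add]
  simp [Fin.append_left, Fin.append_right]

lemma ell_add (x y : ℕ) : ell (x + y) ≤ ell x + ell y := by
  obtain ⟨a1, n1, ha1, hx⟩ := ell_spec x
  obtain ⟨a2, n2, ha2, hy⟩ := ell_spec y
  refine ell_le (Fin.append a1 a2) (Fin.append n1 n2) ?_ (rep_add a1 n1 a2 n2 hx hy)
  intro i
  rcases Nat.lt_or_ge i.val (ell x) with hi | hi
  · have : i = Fin.castAdd (ell y) ⟨i, hi⟩ := rfl
    rw [this, Fin.append_left]; exact ha1 _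
  · have : i = Fin.natAdd (ell x) ⟨i - ell x, by omega⟩ := by
      apply Fin.ext; simp; omega
    rw [this, Fin.append_right]; exact ha2 _

lemma ell_mul_le (h : ℕ) : ∀ s : ℕ, ell (s * h) ≤ pc s * ell h := by
  intro s
  induction s using Nat.strong_induction_on with
  | _ s ih =>
    rcases Nat.eq_zero_or_pos s with rfl | hs
    · simp [ell_zero, pc]
    · have key : s * h = s % 2 * h + 2 * (s / 2 * h) := by
        nlinarith [Nat.div_add_mod s 2]
      have h1 : ell (2 * (s / 2 * h)) ≤ pc (s / 2) * ell h :=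
        le_trans (ell_two_mul _) (ih _ (Nat.div_lt_self hs one_lt_two))
      have h2 : ell (s % 2 * h) ≤ s % 2 * ell h := by
        rcases Nat.mod_two_eq_zero_or_one s with hm | hm <;> rw [hm]
        · simp [ell_zero]
        · simp
      calc ell (s * h) ≤ ell (s % 2 * h) + ell (2 * (s / 2 * h)) := by
            rw [key]; exact ell_add _ _
        _ ≤ s % 2 * ell h + pc (s / 2) * ell h := add_le_add h2 h1
        _ = pc s * ell h := by rw [pc_pos_eq s hs]; ring

lemma pc_le (s : ℕ) : pc s ≤ s := by
  induction s using Nat.strong_induction_on with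
  | _ s ih =>
    rcases Nat.eq_zero_or_pos s with rfl | hs
    · simp [pc]
    · rw [pc_pos_eq s hs]
      have := ih (s / 2) (Nat.div_lt_self hs one_lt_two)
      omega

lemma pc_bound : ∀ s : ℕ, 4 ≤ s → 4 * pc s + 3 ≤ 3 * s := by
  intro s
  induction s using Nat.strong_induction_on with
  | _ s ih =>
    intro hs4
    rcases Nat.lt_or_ge s 8 with h8 | h8
    · interval_cases s <;> simp [pc_pos_eq, pc_zero] <;> omega
    · have hd : 4 ≤ s / 2 := by omega
      have := ih (s / 2) (by omega) hd
      rw [pc_pos_eq s (by omega)]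
      omega

theorem stmt18 (s h : ℕ) (hs : 2 ≤ s) (hs3 : s ≠ 3) (hh : 0 < h) (hlh : 2 ≤ ell h) :
    s * ell h - ell (s * h) > (s + 1) / 2 := by
  have hmul := ell_mul_le h s
  have hpc := pc_le s
  -- key arithmetic: 2 * (s - pc s) ≥ (s+1)/2 + 1
  have harith : (s + 1) / 2 + 1 ≤ 2 * (s - pc s) := by
    rcases Nat.lt_or_ge s 4 with h4 | h4
    · interval_cases s
      · simp [pc_pos_eq, pc_zero]
      · omega
    · have := pc_bound s h4
      omega
  have hL : (s - pc s) * 2 ≤ (s - pc s) * ell h := Nat.mul_le_mul_left _ hlh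
  have hsum : pc s * ell h + (s - pc s) * ell h = s * ell h := by
    rw [← Nat.add_mul]; congr 1; omega
  have : ell (s * h) + ((s + 1) / 2 + 1) ≤ s * ell h := by
    calc ell (s * h) + ((s + 1) / 2 + 1)
        ≤ pc s * ell h + 2 * (s - pc s) := add_le_add hmul harith
      _ ≤ pc s * ell h + (s - pc s) * ell h := by
          rw [Nat.mul_comm 2]; exact Nat.add_le_add_left hL _
      _ = s * ell h := hsum
  omega
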